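/- Let G = (V,E) be a graph and let Ori(G) be the set of the 2^{|E|} digraphs obtained from G by choosing, for each edge {u,v}, one of the two arcs (u,v) or (v,u). Then Σ_{D' ∈ Ori(G)} B_{D'}(q,y,z) = 2^{|E|} · P_G(q, (y+z)/2); equivalently, for every positive integer q, Σ_{D' ∈ Ori(G)} Σ_{f : V → {1,…,q}} y^{(number of ascents of f in D')} z^{(number of descents of f in D')} = Σ_{f : V → {1,…,q}} (y+z)^{(number of bichromatic edges of f)} · 2^{(number of monochromatic edges of f)}. -/

import Mathlib

open Finset

/-- The sum over all `q`-colorings of a digraph of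
`y ^ (number of ascents) * z ^ (number of descents)`. -/
def colorSum (V A : Type) [Fintype V] [DecidableEq V] [Fintype A]
    (s t : A → V) (q : ℕ) (y z : ℚ) : ℚ :=
  ∑ f : V → Fin q,
    y ^ (Finset.univ.filter (fun a => f (s a) < f (t a))).card *
    z ^ (Finset.univ.filter (fun a => f (t a) < f (s a))).card

lemma pow_card_filter_eq_prod {E : Type} [Fintype E] (p : E → Prop) [DecidablePred p] (y : ℚ) :
    y ^ (Finset.univ.filter p).card = ∏ a : E, if p a then y else 1 := by
  rw [Finset.prod_ite, Finset.prod_const, Finset.prod_const, one_pow, mul_one]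

lemma key_sum (V E : Type) [Fintype V] [DecidableEq V] [Fintype E] [DecidableEq E]
    (e1 e2 : E → V) (q : ℕ) (y z : ℚ) :
    ∑ ε : E → Bool,
      colorSum V E (fun e => if ε e then e1 e else e2 e)
        (fun e => if ε e then e2 e else e1 e) q y z =
    ∑ f : V → Fin q,
      (y + z) ^ (Finset.univ.filter (fun e => f (e1 e) ≠ f (e2 e))).card *
      2 ^ (Finset.univ.filter (fun e => f (e1 e) = f (e2 e))).card := by
  unfold colorSum
  rw [Finset.sum_comm]
  refine Finset.sum_congr rfl fun f _ => ?_
  have hterm : ∀ ε : E → Bool,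
      y ^ (Finset.univ.filter (fun a =>
            f ((if ε a then e1 a else e2 a)) < f ((if ε a then e2 a else e1 a)))).card *
      z ^ (Finset.univ.filter (fun a =>
            f ((if ε a then e2 a else e1 a)) < f ((if ε a then e1 a else e2 a)))).card =
      ∏ a : E, ((if f ((if ε a then e1 a else e2 a)) < f ((if ε a then e2 a else e1 a)) then y else 1) *
        (if f ((if ε a then e2 a else e1 a)) < f ((if ε a then e1 a else e2 a)) then z else 1)) := by
    intro ε
    rw [pow_card_filter_eq_prod, pow_card_filter_eq_prod, ← Finset.prod_mul_distrib]
  simp only [hterm]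
  rw [← Fintype.prod_sum (fun (a : E) (b : Bool) =>
    ((if f ((if b then e1 a else e2 a)) < f ((if b then e2 a else e1 a)) then y else 1) *
      (if f ((if b then e2 a else e1 a)) < f ((if b then e1 a else e2 a)) then z else 1)))]
  have hfac : ∀ a : E,
      (∑ b : Bool, ((if f ((if b then e1 a else e2 a)) < f ((if b then e2 a else e1 a)) then y else 1) *
        (if f ((if b then e2 a else e1 a)) < f ((if b then e1 a else e2 a)) then z else 1))) =
      if f (e1 a) = f (e2 a) then 2 else y + z := by
    intro a
    rcases lt_trichotomy (f (e1 a)) (f (e2 a)) with h | h | h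
    · simp [Fintype.sum_bool, h, h.ne, not_lt_of_gt h, add_comm]
    · have h1 : ¬ f (e1 a) < f (e2 a) := by rw [h]; exact lt_irrefl _
      have h2 : ¬ f (e2 a) < f (e1 a) := by rw [h]; exact lt_irrefl _
      simp [h1, h2, h]
      norm_num
    · simp [Fintype.sum_bool, h, h.ne', not_lt_of_gt h, add_comm]
  rw [Finset.prod_congr rfl fun a _ => hfac a, Finset.prod_ite, Finset.prod_const,
    Finset.prod_const]
  have : (Finset.univ.filter fun a : E => ¬ f (e1 a) = f (e2 a)) =
      (Finset.univ.filter fun a : E => f (e1 a) ≠ f (e2 a)) := rfl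
  rw [this, mul_comm]

lemma eval_aeval_poly {n : ℕ} (x : ℚ) (g : Fin n → Polynomial ℚ)
    (p : MvPolynomial (Fin n) ℚ) :
    Polynomial.eval x (MvPolynomial.aeval g p) =
      MvPolynomial.eval (fun i => Polynomial.eval x (g i)) p := by
  induction p using MvPolynomial.induction_on with
  | C a => simp
  | add p q hp hq => simp [hp, hq]
  | mul_X p i hp => simp [hp]

/-- for a graph `G = (V,E)` (edges given by endpoint maps `e1 e2 : E → V`),
orientations of `G` are indexed by `ε : E → Bool` (choosing for each edge one of its two
directions).  If `B ε` is the B-polynomial of the orientation determined by `ε` and `P` is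
the Potts polynomial of `G`, then `Σ_{ε} B_ε(q,y,z) = 2^{|E|} · P_G(q, (y+z)/2)`. -/
theorem sum_B_orientations_eq_potts (V E : Type) [Fintype V] [DecidableEq V]
    [Fintype E] [DecidableEq E]
    (e1 e2 : E → V)
    (B : (E → Bool) → MvPolynomial (Fin 3) ℚ)
    (hB : ∀ ε : E → Bool, ∀ q : ℕ, 0 < q → ∀ y z : ℚ,
      MvPolynomial.eval ![(q : ℚ), y, z] (B ε) =
        colorSum V E
          (fun e => if ε e then e1 e else e2 e)
          (fun e => if ε e then e2 e else e1 e) q y z)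
    (P : MvPolynomial (Fin 2) ℚ)
    (hP : ∀ q : ℕ, 0 < q → ∀ y : ℚ,
      MvPolynomial.eval ![(q : ℚ), y] P =
        ∑ f : V → Fin q, y ^ (Finset.univ.filter (fun e => f (e1 e) ≠ f (e2 e))).card) :
    ∀ q y z : ℚ,
      ∑ ε : E → Bool, MvPolynomial.eval ![q, y, z] (B ε) =
        2 ^ (Fintype.card E) * MvPolynomial.eval ![q, (y + z) / 2] P := by
  intro q y z
  have hnat : ∀ n : ℕ, 0 < n →
      ∑ ε : E → Bool, MvPolynomial.eval ![(n : ℚ), y, z] (B ε) =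
        2 ^ (Fintype.card E) * MvPolynomial.eval ![(n : ℚ), (y + z) / 2] P := by
    intro n hn
    rw [hP n hn]
    calc ∑ ε : E → Bool, MvPolynomial.eval ![(n : ℚ), y, z] (B ε)
        = ∑ ε : E → Bool, colorSum V E (fun e => if ε e then e1 e else e2 e)
            (fun e => if ε e then e2 e else e1 e) n y z :=
          Finset.sum_congr rfl fun ε _ => hB ε n hn y z
      _ = ∑ f : V → Fin n,
            (y + z) ^ (Finset.univ.filter (fun e => f (e1 e) ≠ f (e2 e))).card *
            2 ^ (Finset.univ.filter (fun e => f (e1 e) = f (e2 e))).card := key_sum V E e1 e2 n y z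
      _ = 2 ^ (Fintype.card E) * ∑ f : V → Fin n,
            ((y + z) / 2) ^ (Finset.univ.filter (fun e => f (e1 e) ≠ f (e2 e))).card := by
          rw [Finset.mul_sum]
          refine Finset.sum_congr rfl fun f _ => ?_
          have hcard : (Finset.univ.filter (fun e => f (e1 e) ≠ f (e2 e))).card +
              (Finset.univ.filter (fun e => f (e1 e) = f (e2 e))).card = Fintype.card E := by
            have := Finset.card_filter_add_card_filter_not
              (s := (Finset.univ : Finset E)) (p := fun e : E => f (e1 e) ≠ f (e2 e))
            simp only [not_not] at this
            simpa [Finset.card_univ] using this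
          rw [div_pow, ← hcard, pow_add]
          have h2 : (2 : ℚ) ^ (Finset.univ.filter (fun e => f (e1 e) ≠ f (e2 e))).card ≠ 0 :=
            pow_ne_zero _ two_ne_zero
          field_simp
  -- polynomials in the variable q
  set g : Fin 3 → Polynomial ℚ := ![Polynomial.X, Polynomial.C y, Polynomial.C z] with hg
  set h : Fin 2 → Polynomial ℚ := ![Polynomial.X, Polynomial.C ((y + z) / 2)] with hh
  have hgx : ∀ x : ℚ, (fun i => Polynomial.eval x (g i)) = ![x, y, z] := by
    intro x; funext i; fin_cases i <;> simp [hg]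
  have hhx : ∀ x : ℚ, (fun i => Polynomial.eval x (h i)) = ![x, (y + z) / 2] := by
    intro x; funext i; fin_cases i <;> simp [hh]
  set p1 : Polynomial ℚ := ∑ ε : E → Bool, MvPolynomial.aeval g (B ε) with hp1
  set p2 : Polynomial ℚ := (2 : Polynomial ℚ) ^ (Fintype.card E) * MvPolynomial.aeval h P with hp2
  have heval1 : ∀ x : ℚ, Polynomial.eval x p1 =
      ∑ ε : E → Bool, MvPolynomial.eval ![x, y, z] (B ε) := by
    intro x
    rw [hp1, Polynomial.eval_finset_sum]
    exact Finset.sum_congr rfl fun ε _ => by rw [eval_aeval_poly, hgx]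
  have heval2 : ∀ x : ℚ, Polynomial.eval x p2 =
      2 ^ (Fintype.card E) * MvPolynomial.eval ![x, (y + z) / 2] P := by
    intro x
    rw [hp2, Polynomial.eval_mul, eval_aeval_poly, hhx]
    norm_num
  have hpq : p1 = p2 := by
    apply Polynomial.eq_of_infinite_eval_eq
    apply Set.infinite_of_injective_forall_mem
      (f := fun n : ℕ => ((n + 1 : ℕ) : ℚ))
    · intro a b hab
      simpa using hab
    · intro n
      simp only [Set.mem_setOf_eq, heval1, heval2]
      exact hnat (n + 1) (Nat.succ_pos n)
  have := congrArg (Polynomial.eval q) hpq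
  rw [heval1, heval2] at this
  exact this
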